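/- Let δ ∈ (0,1], β > 0, C > 0, ω ∈ (0,1], and set ω̃ = √(1−ω), γ = 2ωδ/(8βδ + 4β²C + 4ωδ²), ρ = 1 − γδ(1−ω̃²)/4 = 1 − ωγδ/4. Then √(1−ω)·[(1+γβ)/ρ + γβ + γ²β²C/(ρ(ρ − 1 + γδ))] ≤ 1. -/

import Mathlib

set_option maxHeartbeats 4000000 in
theorem stmt_10 (δ β C ω : ℝ)
    (hδ0 : 0 < δ) (hδ1 : δ ≤ 1) (hβ : 0 < β) (hC : 0 < C)
    (hω0 : 0 < ω) (hω1 : ω ≤ 1)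
    (γ ρ : ℝ)
    (hγ : γ = 2 * ω * δ / (8 * β * δ + 4 * β ^ 2 * C + 4 * ω * δ ^ 2))
    (hρ : ρ = 1 - ω * γ * δ / 4) :
    Real.sqrt (1 - ω) * ((1 + γ * β) / ρ + γ * β
        + γ ^ 2 * β ^ 2 * C / (ρ * (ρ - 1 + γ * δ))) ≤ 1 := by
  have hA : 0 < 8 * β * δ + 4 * β ^ 2 * C + 4 * ω * δ ^ 2 := by positivity
  have hg : 0 < γ := by rw [hγ]; positivity
  have h4 : 0 < 4 - ω := by linarith
  have hE : 0 < 2 * (8 * β * δ + 4 * β ^ 2 * C + 4 * ω * δ ^ 2) - ω ^ 2 * δ ^ 2 := by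
    nlinarith [mul_nonneg (mul_nonneg (sub_nonneg.mpr hω1) hω0.le) (sq_nonneg δ),
      mul_pos hβ hδ0, mul_pos (mul_pos hβ hβ) hC, mul_pos hω0 (mul_pos hδ0 hδ0)]
  have hgval : γ * (8 * β * δ + 4 * β ^ 2 * C + 4 * ω * δ ^ 2) = 2 * ω * δ := by
    rw [hγ]; field_simp
  have hr : 0 < ρ := by
    rw [hρ]
    have h1 : ω * γ * δ / 4 < 1 := by
      rw [div_lt_one (by norm_num : (0:ℝ) < 4)]
      have h2 : ω * γ * δ * (8 * β * δ + 4 * β ^ 2 * C + 4 * ω * δ ^ 2)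
          = ω * (2 * ω * δ) * δ := by
        rw [← hgval]; ring
      nlinarith [mul_pos hβ hδ0, mul_pos hω0 hδ0, sq_nonneg (ω*δ)]
    linarith
  have hden : 0 < ρ - 1 + γ * δ := by
    have : ρ - 1 + γ * δ = γ * δ * (4 - ω) / 4 := by rw [hρ]; ring
    rw [this]
    positivity
  have hB : 0 ≤ (1 + γ * β) / ρ + γ * β
      + γ ^ 2 * β ^ 2 * C / (ρ * (ρ - 1 + γ * δ)) := by
    have t1 : 0 ≤ (1 + γ * β) / ρ := div_nonneg (by positivity) hr.le
    have t2 : 0 ≤ γ * β := by positivity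
    have t3 : 0 ≤ γ ^ 2 * β ^ 2 * C / (ρ * (ρ - 1 + γ * δ)) :=
      div_nonneg (by positivity) (mul_nonneg hr.le hden.le)
    linarith
  have hs : Real.sqrt (1 - ω) ≤ 1 - ω / 2 := by
    have h1 : Real.sqrt (1 - ω) ≤ Real.sqrt ((1 - ω / 2) ^ 2) := by
      apply Real.sqrt_le_sqrt; nlinarith
    have h2 : Real.sqrt ((1 - ω / 2) ^ 2) = 1 - ω / 2 := by
      rw [Real.sqrt_sq (by linarith)]
    linarith
  have key : (1 - ω / 2) * ((1 + γ * β) / ρ + γ * β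
      + γ ^ 2 * β ^ 2 * C / (ρ * (ρ - 1 + γ * δ))) ≤ 1 := by
    have hcomb : (1 + γ * β) / ρ + γ * β
        + γ ^ 2 * β ^ 2 * C / (ρ * (ρ - 1 + γ * δ))
        = ((1 + γ * β) * (ρ - 1 + γ * δ) + γ * β * ρ * (ρ - 1 + γ * δ)
            + γ ^ 2 * β ^ 2 * C) / (ρ * (ρ - 1 + γ * δ)) := by
      field_simp
    rw [hcomb, ← mul_div_assoc, div_le_one (mul_pos hr hden), ← sub_nonneg]
    have hkey2 : ρ * (ρ - 1 + γ * δ)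
        - (1 - ω / 2) * ((1 + γ * β) * (ρ - 1 + γ * δ)
            + γ * β * ρ * (ρ - 1 + γ * δ) + γ ^ 2 * β ^ 2 * C)
        = ω * δ ^ 2 * (32*β^4*C^2*ω^2 + 192*δ*β^3*C*ω^2 - 32*δ*β^3*C*ω^3
            + 256*δ^2*β^2*ω^2 - 64*δ^2*β^2*ω^3 + 96*δ^2*β^2*C*ω^2
            + 8*δ^2*β^2*C*ω^3 + 192*δ^3*β*ω^2 + 96*δ^3*β*ω^3
            - 44*δ^3*β*ω^4 + 2*δ^3*β*ω^5 + 96*δ^4*ω^3 - 24*δ^4*ω^4)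
          / (8 * (8 * β * δ + 4 * β ^ 2 * C + 4 * ω * δ ^ 2) ^ 3) := by
      subst hρ
      subst hγ
      field_simp
      ring
    rw [hkey2]
    apply div_nonneg _ (by positivity)
    have hn1 : 0 ≤ 32*β^4*C^2*ω^2 := by positivity
    have hn2 : 0 ≤ 32*β^3*C*δ*ω^2*(6-ω) := by
      apply mul_nonneg (by positivity); linarith
    have hn3 : 0 ≤ 64*β^2*δ^2*ω^2*(4-ω) := by
      apply mul_nonneg (by positivity); linarith
    have hn4 : 0 ≤ 8*β^2*C*δ^2*ω^2*(12+ω) := by positivity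
    have hn5 : 0 ≤ 2*β*δ^3*ω^2*(96+48*ω-22*ω^2+ω^3) := by
      apply mul_nonneg (by positivity); nlinarith
    have hn6 : 0 ≤ 24*ω^3*δ^4*(4-ω) := by
      apply mul_nonneg (by positivity); linarith
    have hsum : 0 ≤ ω * δ ^ 2 := by positivity
    nlinarith [hn1, hn2, hn3, hn4, hn5, hn6,
      mul_nonneg hsum (by linarith [hn1, hn2, hn3, hn4, hn5, hn6] :
        (0:ℝ) ≤ 32*β^4*C^2*ω^2 + 192*δ*β^3*C*ω^2 - 32*δ*β^3*C*ω^3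
            + 256*δ^2*β^2*ω^2 - 64*δ^2*β^2*ω^3 + 96*δ^2*β^2*C*ω^2
            + 8*δ^2*β^2*C*ω^3 + 192*δ^3*β*ω^2 + 96*δ^3*β*ω^3
            - 44*δ^3*β*ω^4 + 2*δ^3*β*ω^5 + 96*δ^4*ω^3 - 24*δ^4*ω^4)]
  calc Real.sqrt (1 - ω) * ((1 + γ * β) / ρ + γ * β
      + γ ^ 2 * β ^ 2 * C / (ρ * (ρ - 1 + γ * δ)))
      ≤ (1 - ω / 2) * ((1 + γ * β) / ρ + γ * β
      + γ ^ 2 * β ^ 2 * C / (ρ * (ρ - 1 + γ * δ))) :=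
        mul_le_mul_of_nonneg_right hs hB
    _ ≤ 1 := key
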